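/- Let X_i, Y_i (i = 1,…,(N−1)/2, N odd) be independent exponential random variables with rates i(N−i)λ, and let T = ∑_i (X_i + Y_i). Let Z_1^u,…,Z_{N−1}^u be independent exponentials with rates λNi/4 and T_upper = ∑_{i=1}^{N−1} Z_i^u. Then T is stochastically dominated by T_upper: P(T > x) ≤ P(T_upper > x) for all x ∈ ℝ. -/

import Mathlib

open MeasureTheory ProbabilityTheory

lemma my_map_Ioi {Ω : Type*} [MeasureSpace Ω] {h : Ω → ℝ} (hm : Measurable h) (y : ℝ) :
    (ℙ : Measure Ω).map h (Set.Ioi y) = ℙ {ω | y < h ω} := by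
  rw [Measure.map_apply hm measurableSet_Ioi]; rfl

lemma my_sumset_meas (x : ℝ) : MeasurableSet {p : ℝ × ℝ | x < p.1 + p.2} :=
  measurableSet_lt measurable_const (measurable_fst.add measurable_snd)

lemma my_prod_tail₁ (μ ν : Measure ℝ) [SFinite μ] [SFinite ν] (x : ℝ) :
    (μ.prod ν) {p : ℝ × ℝ | x < p.1 + p.2} = ∫⁻ t, ν (Set.Ioi (x - t)) ∂μ := by
  rw [Measure.prod_apply (my_sumset_meas x)]
  congr 1; funext t; congr 1; ext s
  simp [sub_lt_iff_lt_add']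

lemma my_prod_tail₂ (μ ν : Measure ℝ) [SFinite μ] [SFinite ν] (x : ℝ) :
    (μ.prod ν) {p : ℝ × ℝ | x < p.1 + p.2} = ∫⁻ s, μ (Set.Ioi (x - s)) ∂ν := by
  rw [Measure.prod_apply_symm (my_sumset_meas x)]
  congr 1; funext s; congr 1; ext t
  simp [sub_lt_iff_lt_add]

lemma my_tail_add_le {Ω₁ Ω₂ : Type*} [MeasureSpace Ω₁] [MeasureSpace Ω₂]
    [IsProbabilityMeasure (ℙ : Measure Ω₁)] [IsProbabilityMeasure (ℙ : Measure Ω₂)]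
    {f g : Ω₁ → ℝ} {f' g' : Ω₂ → ℝ}
    (hf : Measurable f) (hg : Measurable g) (hf' : Measurable f') (hg' : Measurable g')
    (hfg : IndepFun f g ℙ) (hfg' : IndepFun f' g' ℙ)
    (h1 : ∀ x, ℙ {ω | x < f ω} ≤ ℙ {ω | x < f' ω})
    (h2 : ∀ x, ℙ {ω | x < g ω} ≤ ℙ {ω | x < g' ω}) (x : ℝ) :
    ℙ {ω | x < f ω + g ω} ≤ ℙ {ω | x < f' ω + g' ω} := by
  haveI : IsProbabilityMeasure ((ℙ : Measure Ω₁).map f) :=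
    Measure.isProbabilityMeasure_map hf.aemeasurable
  haveI : IsProbabilityMeasure ((ℙ : Measure Ω₁).map g) :=
    Measure.isProbabilityMeasure_map hg.aemeasurable
  haveI : IsProbabilityMeasure ((ℙ : Measure Ω₂).map f') :=
    Measure.isProbabilityMeasure_map hf'.aemeasurable
  haveI : IsProbabilityMeasure ((ℙ : Measure Ω₂).map g') :=
    Measure.isProbabilityMeasure_map hg'.aemeasurable
  calc ℙ {ω | x < f ω + g ω}
      = (((ℙ : Measure Ω₁).map f).prod ((ℙ : Measure Ω₁).map g))
          {p : ℝ × ℝ | x < p.1 + p.2} := by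
        rw [← (indepFun_iff_map_prod_eq_prod_map_map hf.aemeasurable hg.aemeasurable).mp hfg,
          Measure.map_apply (hf.prodMk hg) (my_sumset_meas x)]
        rfl
    _ = ∫⁻ t, ((ℙ : Measure Ω₁).map g) (Set.Ioi (x - t)) ∂((ℙ : Measure Ω₁).map f) :=
        my_prod_tail₁ _ _ x
    _ ≤ ∫⁻ t, ((ℙ : Measure Ω₂).map g') (Set.Ioi (x - t)) ∂((ℙ : Measure Ω₁).map f) :=
        lintegral_mono fun t => by rw [my_map_Ioi hg, my_map_Ioi hg']; exact h2 _
    _ = ∫⁻ s, ((ℙ : Measure Ω₁).map f) (Set.Ioi (x - s)) ∂((ℙ : Measure Ω₂).map g') := by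
        rw [← my_prod_tail₁ _ _ x, my_prod_tail₂]
    _ ≤ ∫⁻ s, ((ℙ : Measure Ω₂).map f') (Set.Ioi (x - s)) ∂((ℙ : Measure Ω₂).map g') :=
        lintegral_mono fun s => by rw [my_map_Ioi hf, my_map_Ioi hf']; exact h1 _
    _ = ℙ {ω | x < f' ω + g' ω} := by
        rw [← my_prod_tail₂,
          ← (indepFun_iff_map_prod_eq_prod_map_map hf'.aemeasurable hg'.aemeasurable).mp hfg',
          Measure.map_apply (hf'.prodMk hg') (my_sumset_meas x)]
        rfl

lemma my_precomp {Ω ι κ : Type*} {mΩ : MeasurableSpace Ω} {μ : Measure Ω}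
    {f : ι → Ω → ℝ} (h : iIndepFun f μ)
    {e : κ → ι} (he : Function.Injective e) :
    iIndepFun (fun i => f (e i)) μ := by
  classical
  rw [iIndepFun_iff_measure_inter_preimage_eq_mul] at h ⊢
  intro S sets hsets
  set sets' : ι → Set ℝ := fun j => ⋂ i ∈ S.filter (fun i => e i = j), sets i with hsets'def
  have hkey : ∀ i ∈ S, sets' (e i) = sets i := by
    intro i hi
    have hfilt : S.filter (fun i' => e i' = e i) = {i} := by
      ext x
      simp only [Finset.mem_filter, Finset.mem_singleton]
      constructor
      · rintro ⟨-, hx⟩; exact he hx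
      · rintro rfl; exact ⟨hi, rfl⟩
    simp only [hsets'def]
    rw [hfilt]
    simp
  have hmeas' : ∀ j, j ∈ S.image e → MeasurableSet (sets' j) := by
    intro j hj
    obtain ⟨i, hi, rfl⟩ := Finset.mem_image.mp hj
    rw [hkey i hi]; exact hsets i hi
  have := h (S.image e) hmeas'
  rw [Finset.set_biInter_finset_image, Finset.prod_image (fun i _ j _ hij => he hij)] at this
  calc μ (⋂ i ∈ S, f (e i) ⁻¹' sets i)
      = μ (⋂ i ∈ S, f (e i) ⁻¹' sets' (e i)) := by
        congr 1; exact Set.iInter₂_congr fun i hi => by rw [hkey i hi]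
    _ = ∏ i ∈ S, μ (f (e i) ⁻¹' sets' (e i)) := this
    _ = ∏ i ∈ S, μ (f (e i) ⁻¹' sets i) :=
        Finset.prod_congr rfl fun i hi => by rw [hkey i hi]

lemma my_tail_sum_le {ι : Type*} {Ω₁ Ω₂ : Type*} [MeasureSpace Ω₁] [MeasureSpace Ω₂]
    [IsProbabilityMeasure (ℙ : Measure Ω₁)] [IsProbabilityMeasure (ℙ : Measure Ω₂)]
    (f : ι → Ω₁ → ℝ) (g : ι → Ω₂ → ℝ)
    (hfm : ∀ i, Measurable (f i)) (hgm : ∀ i, Measurable (g i))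
    (hf : iIndepFun f ℙ)
    (hg : iIndepFun g ℙ)
    (hcomp : ∀ i x, ℙ {ω | x < f i ω} ≤ ℙ {ω | x < g i ω}) (s : Finset ι) (x : ℝ) :
    ℙ {ω | x < ∑ i ∈ s, f i ω} ≤ ℙ {ω | x < ∑ i ∈ s, g i ω} := by
  classical
  induction s using Finset.induction_on generalizing x with
  | empty =>
    simp only [Finset.sum_empty]
    by_cases hx : x < 0 <;> simp [hx]
  | insert a s ha ih =>
    simp only [Finset.sum_insert ha]
    have hfeq : (fun ω => ∑ i ∈ s, f i ω) = ∑ j ∈ s, f j := by funext ω; simp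
    have hgeq : (fun ω => ∑ i ∈ s, g i ω) = ∑ j ∈ s, g j := by funext ω; simp
    have hindf : IndepFun (f a) (fun ω => ∑ i ∈ s, f i ω) ℙ := by
      rw [hfeq]; exact (hf.indepFun_finsetSum_of_notMem hfm ha).symm
    have hindg : IndepFun (g a) (fun ω => ∑ i ∈ s, g i ω) ℙ := by
      rw [hgeq]; exact (hg.indepFun_finsetSum_of_notMem hgm ha).symm
    exact my_tail_add_le (hfm a) (by fun_prop) (hgm a) (by fun_prop)
      hindf hindg (hcomp a) ih x

/-- Stochastic upper bound: for odd `N`, independent exponentials `X_i, Y_i`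
(`i = 1,…,(N−1)/2`) with rates `i(N−i)λ`, and independent exponentials `Z_i^u`
(`i = 1,…,N−1`) with rates `λNi/4`, the sum `T = ∑ (X_i + Y_i)` satisfies
`P(T > x) ≤ P(T_upper > x)` for all `x ∈ ℝ`. -/
theorem stmt_12 {Ω₁ Ω₂ : Type*} [MeasureSpace Ω₁] [MeasureSpace Ω₂]
    [IsProbabilityMeasure (ℙ : Measure Ω₁)] [IsProbabilityMeasure (ℙ : Measure Ω₂)]
    (N : ℕ) (hodd : Odd N) (hN : 3 ≤ N) (lam : ℝ) (hlam : 0 < lam)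
    (X Y : Fin ((N - 1) / 2) → Ω₁ → ℝ) (Zu : Fin (N - 1) → Ω₂ → ℝ)
    (hXmeas : ∀ i, Measurable (X i)) (hYmeas : ∀ i, Measurable (Y i))
    (hZmeas : ∀ i, Measurable (Zu i))
    (hindXY : iIndepFun (Sum.elim X Y) ℙ)
    (hindZ : iIndepFun Zu ℙ)
    (hX : ∀ i : Fin ((N - 1) / 2), ∀ x : ℝ, 0 ≤ x →
      ℙ {ω | x < X i ω}
        = ENNReal.ofReal (Real.exp (-(((i : ℕ) + 1) * ((N : ℝ) - ((i : ℕ) + 1)) * lam) * x)))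
    (hY : ∀ i : Fin ((N - 1) / 2), ∀ x : ℝ, 0 ≤ x →
      ℙ {ω | x < Y i ω}
        = ENNReal.ofReal (Real.exp (-(((i : ℕ) + 1) * ((N : ℝ) - ((i : ℕ) + 1)) * lam) * x)))
    (hZ : ∀ i : Fin (N - 1), ∀ x : ℝ, 0 ≤ x →
      ℙ {ω | x < Zu i ω}
        = ENNReal.ofReal (Real.exp (-(lam * N * ((i : ℕ) + 1) / 4) * x))) :
    ∀ x : ℝ, ℙ {ω | x < ∑ i, X i ω + ∑ i, Y i ω} ≤ ℙ {ω | x < ∑ i, Zu i ω} := by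
  intro x
  obtain ⟨m, hm⟩ := hodd
  have hNR : (3 : ℝ) ≤ (N : ℝ) := by exact_mod_cast hN
  -- the pairing injection
  set e : Fin ((N - 1) / 2) ⊕ Fin ((N - 1) / 2) → Fin (N - 1) :=
    Sum.elim (fun i => ⟨2 * (i : ℕ), by have := i.isLt; omega⟩)
      (fun i => ⟨2 * (i : ℕ) + 1, by have := i.isLt; omega⟩) with he_def
  have he_inj : Function.Injective e := by
    rintro (i | i) (j | j) h <;>
      simp only [he_def, Sum.elim_inl, Sum.elim_inr, Fin.mk.injEq] at h
    · exact congrArg Sum.inl (Fin.ext (by omega))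
    · exact absurd h (by omega)
    · exact absurd h (by omega)
    · exact congrArg Sum.inr (Fin.ext (by omega))
  have he_bij : Function.Bijective e :=
    (Fintype.bijective_iff_injective_and_card e).mpr
      ⟨he_inj, by simp only [Fintype.card_sum, Fintype.card_fin]; omega⟩
  set g : Fin ((N - 1) / 2) ⊕ Fin ((N - 1) / 2) → Ω₂ → ℝ := fun p => Zu (e p) with hg_def
  have hgind : iIndepFun g ℙ :=
    my_precomp hindZ he_inj
  have hgm : ∀ p, Measurable (g p) := fun p => hZmeas _
  have hfm : ∀ p, Measurable (Sum.elim X Y p) := by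
    rintro (i | i)
    · exact hXmeas i
    · exact hYmeas i
  -- componentwise tail comparison
  have hcomp : ∀ p y, ℙ {ω | y < Sum.elim X Y p ω} ≤ ℙ {ω | y < g p ω} := by
    intro p y
    by_cases hy : 0 ≤ y
    · cases p with
      | inl i =>
        have hi : 2 * ((i : ℕ) : ℝ) + 2 ≤ (N : ℝ) - 1 := by
          have h1 : 2 * (i : ℕ) + 2 ≤ N - 1 := by have := i.isLt; omega
          have h2 : ((2 * (i : ℕ) + 2 : ℕ) : ℝ) ≤ ((N - 1 : ℕ) : ℝ) := Nat.cast_le.mpr h1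
          push_cast [Nat.cast_sub (by omega : 1 ≤ N)] at h2
          linarith
        have hrate : lam * (N : ℝ) * ((2 * ((i : ℕ) : ℝ)) + 1) / 4
            ≤ (((i : ℕ) : ℝ) + 1) * ((N : ℝ) - (((i : ℕ) : ℝ) + 1)) * lam := by
          have hc : (0 : ℝ) ≤ ((i : ℕ) : ℝ) := Nat.cast_nonneg _
          nlinarith [mul_nonneg hc (by linarith : (0 : ℝ) ≤ (N : ℝ) - 2 * ((i : ℕ) : ℝ) - 3),
            hlam.le, mul_pos hlam (by linarith : (0 : ℝ) < ((i : ℕ) : ℝ) + 1)]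
        rw [Sum.elim_inl, hX i y hy, hg_def, hZ (e (Sum.inl i)) y hy]
        apply ENNReal.ofReal_le_ofReal
        apply Real.exp_le_exp.mpr
        have hval : ((e (Sum.inl i) : ℕ) : ℝ) = 2 * ((i : ℕ) : ℝ) := by
          simp [he_def]
        rw [hval]
        nlinarith [mul_le_mul_of_nonneg_right hrate hy]
      | inr i =>
        have hi : 2 * ((i : ℕ) : ℝ) + 2 ≤ (N : ℝ) - 1 := by
          have h1 : 2 * (i : ℕ) + 2 ≤ N - 1 := by have := i.isLt; omega
          have h2 : ((2 * (i : ℕ) + 2 : ℕ) : ℝ) ≤ ((N - 1 : ℕ) : ℝ) := Nat.cast_le.mpr h1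
          push_cast [Nat.cast_sub (by omega : 1 ≤ N)] at h2
          linarith
        have hrate : lam * (N : ℝ) * ((2 * ((i : ℕ) : ℝ) + 1) + 1) / 4
            ≤ (((i : ℕ) : ℝ) + 1) * ((N : ℝ) - (((i : ℕ) : ℝ) + 1)) * lam := by
          have hc : (0 : ℝ) ≤ ((i : ℕ) : ℝ) := Nat.cast_nonneg _
          nlinarith [mul_nonneg hc (by linarith : (0 : ℝ) ≤ (N : ℝ) - 2 * ((i : ℕ) : ℝ) - 3),
            hlam.le, mul_pos hlam (by linarith : (0 : ℝ) < ((i : ℕ) : ℝ) + 1)]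
        rw [Sum.elim_inr, hY i y hy, hg_def, hZ (e (Sum.inr i)) y hy]
        apply ENNReal.ofReal_le_ofReal
        apply Real.exp_le_exp.mpr
        have hval : ((e (Sum.inr i) : ℕ) : ℝ) = 2 * ((i : ℕ) : ℝ) + 1 := by
          simp [he_def]
        rw [hval]
        nlinarith [mul_le_mul_of_nonneg_right hrate hy]
    · have hone : ℙ {ω | (0 : ℝ) < Zu (e p) ω} = 1 := by
        rw [hZ (e p) 0 le_rfl]; simp
      calc ℙ {ω | y < Sum.elim X Y p ω} ≤ 1 := prob_le_one
        _ = ℙ {ω | (0 : ℝ) < Zu (e p) ω} := hone.symm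
        _ ≤ ℙ {ω | y < g p ω} :=
            measure_mono fun ω hω => lt_trans (not_le.mp hy) hω
  have main := my_tail_sum_le (Sum.elim X Y) g hfm hgm hindXY hgind hcomp Finset.univ x
  have h1 : ∀ ω : Ω₁, (∑ p, Sum.elim X Y p ω) = ∑ i, X i ω + ∑ i, Y i ω := by
    intro ω; rw [Fintype.sum_sum_type]; rfl
  have h2 : ∀ ω : Ω₂, (∑ p, g p ω) = ∑ j, Zu j ω := fun ω =>
    Fintype.sum_bijective e he_bij _ _ (fun p => rfl)
  simpa only [h1, h2] using main
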